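/- (Construction of quadratic sources from an involutive quotient.) Let k be a field of characteristic zero, let α ∈ k with α ≠ 0, let β, c ∈ k, let E ∈ k[x] be a nonzero polynomial, and let G ∈ k[x] be nonconstant. Define g := G.comp ((X - C c)^2), B := C c + X * (E.comp (X^2)), A := C α * X^2 + C β, and f := (G.comp (X * E^2)).comp (C α⁻¹ * X - C (β/α)). Then f.comp A = g.comp B; the polynomial B is not a polynomial in X²; and the intermediate field of k(X) generated over k by the images of A and B equals all of k(X). -/

import Mathlib

open Polynomial

lemma aux_aeval_mem {k L : Type*} [Field k] [Field L] [Algebra k L]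
    (F : IntermediateField k L) {x : L} (hx : x ∈ F) (p : k[X]) :
    Polynomial.aeval x p ∈ F :=
  Algebra.adjoin_le (show {x} ⊆ (F.toSubalgebra : Set L) by simpa using hx)
    (Polynomial.aeval_mem_adjoin_singleton k x)

lemma aux_algebraMap_eq_aeval {k : Type*} [Field k] (p : k[X]) :
    algebraMap k[X] (RatFunc k) p
      = Polynomial.aeval (algebraMap k[X] (RatFunc k) X) p := by
  have : (IsScalarTower.toAlgHom k k[X] (RatFunc k))
      = Polynomial.aeval (algebraMap k[X] (RatFunc k) X) := by
    apply Polynomial.algHom_ext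
    simp
  calc algebraMap k[X] (RatFunc k) p
      = (IsScalarTower.toAlgHom k k[X] (RatFunc k)) p := rfl
    _ = Polynomial.aeval (algebraMap k[X] (RatFunc k) X) p := by rw [this]

theorem stmt_4 (k : Type*) [Field k] [CharZero k]
    (α : k) (hα : α ≠ 0) (β c : k) (E G : k[X]) (hE : E ≠ 0) (hG : 0 < G.natDegree)
    (g B A f : k[X])
    (hg : g = G.comp ((X - C c) ^ 2))
    (hB : B = C c + X * (E.comp (X ^ 2)))
    (hA : A = C α * X ^ 2 + C β)
    (hf : f = (G.comp (X * E ^ 2)).comp (C α⁻¹ * X - C (β / α))) :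
    f.comp A = g.comp B ∧
    (¬ ∃ B₀ : k[X], B = B₀.comp (X ^ 2)) ∧
    IntermediateField.adjoin k
      {algebraMap k[X] (RatFunc k) A, algebraMap k[X] (RatFunc k) B} = ⊤ := by
  refine ⟨?_, ?_, ?_⟩
  · subst hg hB hA hf
    rw [Polynomial.comp_assoc, Polynomial.comp_assoc, Polynomial.comp_assoc]
    congr 1
    have h1 : (C α⁻¹ * X - C (β / α)).comp (C α * X ^ 2 + C β) = X ^ 2 := by
      simp only [sub_comp, mul_comp, C_comp, X_comp, div_eq_inv_mul, ← C_mul]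
      rw [mul_add, ← C_mul, ← mul_assoc, ← C_mul, inv_mul_cancel₀ hα, C_1]
      ring
    rw [h1]
    simp only [mul_comp, pow_comp, X_comp, sub_comp, C_comp, add_comp]
    ring
  · rintro ⟨B₀, h⟩
    obtain ⟨n, hn⟩ : ∃ n, E.coeff n ≠ 0 := by
      by_contra h'
      push_neg at h'
      exact hE (Polynomial.ext fun n => by simp [h' n])
    apply hn
    have h1 : B.coeff (2 * n + 1) = E.coeff n := by
      rw [hB]
      rw [Polynomial.coeff_add, Polynomial.coeff_C,
        if_neg (by omega), Polynomial.coeff_X_mul, ← Polynomial.expand_eq_comp_X_pow,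
        Polynomial.coeff_expand_mul' (by norm_num)]
      ring
    have h2 : B.coeff (2 * n + 1) = 0 := by
      rw [h, ← Polynomial.expand_eq_comp_X_pow, Polynomial.coeff_expand (by norm_num)]
      rw [if_neg (by omega)]
    rw [← h1, h2]
  · set i := algebraMap k[X] (RatFunc k) with hi
    set F := IntermediateField.adjoin k {i A, i B} with hF
    have hAF : i A ∈ F := IntermediateField.subset_adjoin _ _ (by left; rfl)
    have hBF : i B ∈ F := IntermediateField.subset_adjoin _ _ (by right; rfl)
    have hconst : ∀ a : k, i (C a) ∈ F := by
      intro a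
      have : i (C a) = algebraMap k (RatFunc k) a := by
        rw [hi, IsScalarTower.algebraMap_apply k k[X] (RatFunc k), Polynomial.algebraMap_eq]
      rw [this]
      exact F.algebraMap_mem a
    have hX2 : i (X ^ 2 : k[X]) ∈ F := by
      have hX2e : (X ^ 2 : k[X]) = C α⁻¹ * (A - C β) := by
        rw [hA]
        rw [add_sub_cancel_right, ← mul_assoc, ← C_mul, inv_mul_cancel₀ hα, C_1, one_mul]
      rw [hX2e, map_mul, map_sub]
      exact F.mul_mem (hconst _) (F.sub_mem hAF (hconst _))
    have hEX2 : i (E.comp (X ^ 2)) ∈ F := by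
      have : i (E.comp (X ^ 2)) = Polynomial.aeval (i (X ^ 2 : k[X])) E := by
        rw [aux_algebraMap_eq_aeval, Polynomial.aeval_comp, aux_algebraMap_eq_aeval (X ^ 2)]
      rw [this]
      exact aux_aeval_mem F hX2 E
    have hEX2ne : i (E.comp (X ^ 2)) ≠ 0 := by
      apply RatFunc.algebraMap_ne_zero
      rw [← Polynomial.expand_eq_comp_X_pow]
      exact (Polynomial.expand_ne_zero (by norm_num)).mpr hE
    have hXF : i (X : k[X]) ∈ F := by
      have hBe : i (X : k[X]) = (i B - i (C c)) * (i (E.comp (X ^ 2)))⁻¹ := by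
        rw [hB]
        field_simp
        rw [map_add, map_mul]; ring
      rw [hBe]
      exact F.mul_mem (F.sub_mem hBF (hconst _)) (F.inv_mem hEX2)
    have hall : ∀ p : k[X], i p ∈ F := by
      intro p
      rw [hi, aux_algebraMap_eq_aeval]
      exact aux_aeval_mem F hXF p
    rw [eq_top_iff]
    intro x _
    rw [← RatFunc.num_div_denom x]
    exact F.div_mem (hall _) (hall _)
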